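/- Let d, w₁, w₂, w₃ be odd positive integers, χ : ℤ → ℂ be d-periodic, ξ ∈ ℂ with appropriate nonvanishing conditions. Then for all n ≥ 0 and y₁ ∈ ℂ: w₁ⁿ ∑_{k=0}^{n} C(n,k) ∑_{a=0}^{w₁d−1} (−1)^a χ(a) ξ^{a w₂ w₃} E_{k,χ,ξ^{w₁w₃}}(w₂y₁ + (w₂/w₁)a) T_{n−k}(w₃d−1;χ,ξ^{w₁w₂}) w₂^{n−k} w₃^{k} is invariant under all six permutations of (w₁,w₂,w₃). -/

import Mathlib

open Finset PowerSeries

/-- Generating function of the generalized twisted Euler polynomials: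
`2 e^{xt} (ξ^d e^{dt}+1)⁻¹ ∑_{a=0}^{d-1} (-1)^a χ(a) ξ^a e^{at}` in `ℂ[[t]]`. -/
noncomputable def Egf (d : ℕ) (χ : ℤ → ℂ) (ξ x : ℂ) : PowerSeries ℂ :=
  2 * rescale x (exp ℂ) * (ξ ^ d • rescale (d : ℂ) (exp ℂ) + 1)⁻¹ *
    ∑ a ∈ Finset.range d, ((-1 : ℂ) ^ a * χ a * ξ ^ a) • rescale (a : ℂ) (exp ℂ)

/-- The generalized twisted Euler polynomial `E_{n,χ,ξ}(x)`. -/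
noncomputable def E (d : ℕ) (χ : ℤ → ℂ) (ξ x : ℂ) (n : ℕ) : ℂ :=
  (n.factorial : ℂ) * PowerSeries.coeff n (Egf d χ ξ x)

/-- The alternating generalized twisted power sum `T_k(m; χ, ξ)`. -/
noncomputable def T (m : ℕ) (χ : ℤ → ℂ) (ξ : ℂ) (k : ℕ) : ℂ :=
  ∑ a ∈ Finset.range (m + 1), (-1 : ℂ) ^ a * χ a * ξ ^ a * (a : ℂ) ^ k


/-- The expression of Theorem 5, as a function of `(w₁, w₂, w₃) = (u, v, w)`. -/
noncomputable def S (d : ℕ) (χ : ℤ → ℂ) (ξ : ℂ) (n : ℕ) (y₁ : ℂ)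
    (u v w : ℕ) : ℂ :=
  (u : ℂ) ^ n * ∑ k ∈ Finset.range (n + 1), (n.choose k : ℂ) *
    (∑ a ∈ Finset.range (u * d), (-1 : ℂ) ^ a * χ a * ξ ^ (a * v * w) *
      E d χ (ξ ^ (u * w)) ((v : ℂ) * y₁ + (v : ℂ) / (u : ℂ) * (a : ℂ)) k) *
    T (w * d - 1) χ (ξ ^ (u * v)) (n - k) *
    (v : ℂ) ^ (n - k) * (w : ℂ) ^ k

/- ### Auxiliary definitions and lemmas -/

noncomputable def Qs (d : ℕ) (χ : ℤ → ℂ) (ξ : ℂ) (m : ℕ) : PowerSeries ℂ :=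
  ∑ c ∈ Finset.range d, ((-1 : ℂ) ^ c * χ c * ξ ^ (m * c)) • rescale ((m * c : ℕ) : ℂ) (exp ℂ)

noncomputable def Ds (d : ℕ) (ξ : ℂ) (m : ℕ) : PowerSeries ℂ :=
  ξ ^ (d * m) • rescale ((d * m : ℕ) : ℂ) (exp ℂ) + 1

noncomputable def BS (d : ℕ) (χ : ℤ → ℂ) (ξ : ℂ) (u m : ℕ) : PowerSeries ℂ :=
  ∑ a ∈ Finset.range (u * d), ((-1 : ℂ) ^ a * χ a * ξ ^ (m * a)) • rescale ((m * a : ℕ) : ℂ) (exp ℂ)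

lemma rescale_exp_pow (c : ℂ) (j : ℕ) : (rescale c (exp ℂ)) ^ j = rescale (j * c) (exp ℂ) := by
  induction j with
  | zero => simp [rescale_zero, constantCoeff_exp]
  | succ j ih =>
      rw [pow_succ, ih, exp_mul_exp_eq_exp_add]
      congr 1
      push_cast; ring

lemma smul_exp_pow (s c : ℂ) (j : ℕ) :
    (s • rescale c (exp ℂ)) ^ j = (s ^ j) • rescale ((j : ℂ) * c) (exp ℂ) := by
  rw [smul_pow, rescale_exp_pow]

lemma constCoeff_rescale' (c : ℂ) (f : PowerSeries ℂ) :
    constantCoeff (rescale c f) = constantCoeff f := by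
  rw [← coeff_zero_eq_constantCoeff_apply, coeff_rescale, pow_zero, one_mul,
    coeff_zero_eq_constantCoeff_apply]

lemma constCoeff_Ds (d : ℕ) (ξ : ℂ) (m : ℕ) :
    constantCoeff (Ds d ξ m) = ξ ^ (d * m) + 1 := by
  unfold Ds
  rw [map_add, map_one, constantCoeff_smul, constCoeff_rescale', constantCoeff_exp, smul_eq_mul,
    mul_one]

lemma mult (d : ℕ) (hd : Odd d) (χ : ℤ → ℂ) (hχ : Function.Periodic χ (d : ℤ)) (ξ : ℂ)
    (u m : ℕ) (hu : Odd u) :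
    Ds d ξ m * BS d χ ξ u m = Ds d ξ (u * m) * Qs d χ ξ m := by
  set x : PowerSeries ℂ := ξ ^ (m * d) • rescale ((m * d : ℕ) : ℂ) (exp ℂ) with hx
  have hxj : ∀ j : ℕ, ((-1 : ℂ) ^ j * ξ ^ (m * (d * j))) • rescale ((m * (d * j) : ℕ) : ℂ) (exp ℂ)
      = (-x) ^ j := by
    intro j
    rw [← neg_one_smul ℂ x, smul_pow, hx, smul_pow, rescale_exp_pow, smul_smul]
    rw [show ((m * (d * j) : ℕ) : ℂ) = (j : ℂ) * ((m * d : ℕ) : ℂ) by push_cast; ring,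
      show ξ ^ (m * (d * j)) = (ξ ^ (m * d)) ^ j by rw [← pow_mul, mul_assoc]]
  have h1 : BS d χ ξ u m
      = (∑ j ∈ Finset.range u, (-x) ^ j) * Qs d χ ξ m := by
    clear hu
    unfold BS
    induction u with
    | zero => simp
    | succ u ih =>
        rw [Nat.succ_mul, Finset.sum_range_add, Finset.sum_range_succ, add_mul, ih]
        congr 1
        rw [← hxj u]
        unfold Qs
        rw [Finset.mul_sum]
        refine Finset.sum_congr rfl fun c _ => ?_
        have hchi : χ ((u * d + c : ℕ) : ℤ) = χ c := by
          have := (hχ.nat_mul u) (c : ℤ)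
          rw [show ((u * d + c : ℕ) : ℤ) = (c : ℤ) + (u : ℤ) * (d : ℤ) by push_cast; ring]
          simpa using this
        have hsgn : ((-1 : ℂ)) ^ (u * d + c) = (-1 : ℂ) ^ u * (-1 : ℂ) ^ c := by
          rw [pow_add, mul_comm u d, pow_mul, hd.neg_one_pow]
        have hres : rescale ((m * (u * d + c) : ℕ) : ℂ) (exp ℂ)
            = rescale ((m * (d * u) : ℕ) : ℂ) (exp ℂ) * rescale ((m * c : ℕ) : ℂ) (exp ℂ) := by
          rw [exp_mul_exp_eq_exp_add]
          congr 1
          push_cast; ring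
        rw [hchi, hsgn, hres, smul_mul_smul_comm]
        congr 1
        rw [show m * (u * d + c) = m * (d * u) + m * c by ring, pow_add]
        ring
  rw [h1]
  have hDm : Ds d ξ m = x + 1 := by
    unfold Ds; rw [hx, Nat.mul_comm d m]
  have hxu : x ^ u = ξ ^ (d * (u * m)) • rescale ((d * (u * m) : ℕ) : ℂ) (exp ℂ) := by
    rw [hx, smul_exp_pow]
    rw [show ((u : ℂ)) * ((m * d : ℕ) : ℂ) = ((d * (u * m) : ℕ) : ℂ) by push_cast; ring,
      show (ξ ^ (m * d)) ^ u = ξ ^ (d * (u * m)) by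
        rw [← pow_mul, show m * d * u = d * (u * m) by ring]]
  have hgeom : (x + 1) * ∑ j ∈ Finset.range u, (-x) ^ j = x ^ u + 1 := by
    have hg := geom_sum_mul (-x) u
    rw [hu.neg_pow] at hg
    linear_combination -hg
  rw [hDm, ← mul_assoc, hgeom, hxu]
  rfl

lemma rescale_C' (c a : ℂ) : rescale c (C a) = C a := by
  ext n
  rw [coeff_rescale]
  cases n with
  | zero => simp
  | succ n => simp [coeff_C]

lemma rescale_smul' (c a : ℂ) (f : PowerSeries ℂ) :
    rescale c (a • f) = a • rescale c f := by
  rw [smul_eq_C_mul, map_mul, rescale_C', ← smul_eq_C_mul]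

lemma rescale_inv (c : ℂ) (f : PowerSeries ℂ) (hf : constantCoeff f ≠ 0) :
    rescale c (f⁻¹) = (rescale c f)⁻¹ := by
  rw [PowerSeries.eq_inv_iff_mul_eq_one (by rwa [constCoeff_rescale'])]
  rw [← map_mul, mul_comm, PowerSeries.mul_inv_cancel _ hf, map_one]

lemma rescale_Egf (d : ℕ) (χ : ℤ → ℂ) (η x c : ℂ) (hη : η ^ d + 1 ≠ 0) :
    rescale c (Egf d χ η x) =
      2 * rescale (x * c) (exp ℂ) * (η ^ d • rescale ((d : ℂ) * c) (exp ℂ) + 1)⁻¹ *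
        ∑ a ∈ Finset.range d, ((-1 : ℂ) ^ a * χ a * η ^ a) • rescale ((a : ℂ) * c) (exp ℂ) := by
  unfold Egf
  have hden : constantCoeff (η ^ d • rescale (d : ℂ) (exp ℂ) + 1) ≠ 0 := by
    rw [map_add, map_one, constantCoeff_smul, constCoeff_rescale', constantCoeff_exp,
      smul_eq_mul, mul_one]
    exact hη
  rw [map_mul, map_mul, map_mul, map_ofNat, map_sum, rescale_rescale, rescale_inv _ _ hden,
    map_add, map_one, rescale_smul', rescale_rescale]
  congr 1
  refine Finset.sum_congr rfl fun a _ => ?_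
  rw [rescale_smul', rescale_rescale]

/-- The manifestly symmetric form of the expression. -/
noncomputable def SymS (d : ℕ) (χ : ℤ → ℂ) (ξ : ℂ) (n : ℕ) (y₁ : ℂ) (u v w : ℕ) : ℂ :=
  (n.factorial : ℂ) * PowerSeries.coeff n
    (2 * rescale (((u * v * w : ℕ) : ℂ) * y₁) (exp ℂ) * Ds d ξ (u * v * w) * Ds d ξ (u * v * w) *
      (Ds d ξ (u * v))⁻¹ * (Ds d ξ (u * w))⁻¹ * (Ds d ξ (v * w))⁻¹ *
      (Qs d χ ξ (u * v) * Qs d χ ξ (u * w) * Qs d χ ξ (v * w)))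

set_option maxHeartbeats 2000000 in
lemma S_eq (d : ℕ) (hd : Odd d) (hd0 : 0 < d) (χ : ℤ → ℂ)
    (hχ : Function.Periodic χ (d : ℤ)) (ξ : ℂ) (u v w : ℕ)
    (hu : Odd u) (hw : Odd w) (hu0 : 0 < u) (hw0 : 0 < w)
    (h1 : ξ ^ (d * (u * v)) + 1 ≠ 0) (h2 : ξ ^ (d * (u * w)) + 1 ≠ 0)
    (h3 : ξ ^ (d * (v * w)) + 1 ≠ 0) (n : ℕ) (y₁ : ℂ) :
    S d χ ξ n y₁ u v w = SymS d χ ξ n y₁ u v w := by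
  set F : PowerSeries ℂ := ∑ a ∈ Finset.range (u * d),
      ((-1 : ℂ) ^ a * χ a * ξ ^ (a * v * w)) •
        Egf d χ (ξ ^ (u * w)) ((v : ℂ) * y₁ + (v : ℂ) / (u : ℂ) * (a : ℂ)) with hFdef
  set G : PowerSeries ℂ := ∑ b ∈ Finset.range (w * d),
      ((-1 : ℂ) ^ b * χ b * ξ ^ (u * v * b)) • rescale ((b : ℕ) : ℂ) (exp ℂ) with hGdef
  have step1 : S d χ ξ n y₁ u v w
      = (n.factorial : ℂ) * PowerSeries.coeff n
          (rescale (((w * u : ℕ)) : ℂ) F * rescale (((v * u : ℕ)) : ℂ) G) := by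
    have hA : ∀ k, (∑ a ∈ Finset.range (u * d), (-1 : ℂ) ^ a * χ a * ξ ^ (a * v * w) *
        E d χ (ξ ^ (u * w)) ((v : ℂ) * y₁ + (v : ℂ) / (u : ℂ) * (a : ℂ)) k)
        = (k.factorial : ℂ) * PowerSeries.coeff k F := by
      intro k
      rw [hFdef, map_sum, Finset.mul_sum]
      refine Finset.sum_congr rfl fun a _ => ?_
      rw [map_smul, smul_eq_mul]
      unfold E
      ring
    have hT : ∀ j, T (w * d - 1) χ (ξ ^ (u * v)) j
        = (j.factorial : ℂ) * PowerSeries.coeff j G := by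
      intro j
      unfold T
      rw [Nat.sub_add_cancel (Nat.one_le_iff_ne_zero.mpr (by positivity)), hGdef, map_sum,
        Finset.mul_sum]
      refine Finset.sum_congr rfl fun b _ => ?_
      rw [map_smul, smul_eq_mul, coeff_rescale, coeff_exp]
      simp only [one_div, map_inv₀, map_natCast]
      have hjf : (j.factorial : ℂ) ≠ 0 := Nat.cast_ne_zero.mpr j.factorial_ne_zero
      rw [pow_mul]
      linear_combination (-((-1 : ℂ) ^ b * χ b * (ξ ^ (u * v)) ^ b * (b : ℂ) ^ j)) *
        (mul_inv_cancel₀ hjf)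
    unfold S
    rw [coeff_mul, Finset.Nat.sum_antidiagonal_eq_sum_range_succ_mk, Finset.mul_sum,
      Finset.mul_sum]
    refine Finset.sum_congr rfl fun k hk => ?_
    have hkn : k ≤ n := Nat.lt_succ_iff.mp (Finset.mem_range.mp hk)
    have hfact : ((n.factorial : ℕ) : ℂ) = (n.choose k : ℂ) * (k.factorial : ℂ) *
        ((n - k).factorial : ℂ) := by
      exact_mod_cast congrArg (Nat.cast (R := ℂ))
        (Nat.choose_mul_factorial_mul_factorial hkn).symm
    have hupow : ((u : ℂ)) ^ n = (u : ℂ) ^ k * (u : ℂ) ^ (n - k) := by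
      rw [← pow_add, Nat.add_sub_cancel' hkn]
    dsimp only
    rw [hA k, hT (n - k), coeff_rescale, coeff_rescale, hfact, hupow]
    push_cast
    ring
  have hη : (ξ ^ (u * w)) ^ d + 1 ≠ 0 := by
    rw [← pow_mul, show u * w * d = d * (u * w) by ring]; exact h2
  have hu0' : (u : ℂ) ≠ 0 := Nat.cast_ne_zero.mpr hu0.ne'
  have step2 : rescale (((w * u : ℕ)) : ℂ) F
      = 2 * rescale (((u * v * w : ℕ) : ℂ) * y₁) (exp ℂ) * (Ds d ξ (u * w))⁻¹ *
          Qs d χ ξ (u * w) * BS d χ ξ u (v * w) := by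
    rw [hFdef, map_sum]
    have hterm : ∀ a : ℕ,
        rescale (((w * u : ℕ)) : ℂ) (((-1 : ℂ) ^ a * χ a * ξ ^ (a * v * w)) •
          Egf d χ (ξ ^ (u * w)) ((v : ℂ) * y₁ + (v : ℂ) / (u : ℂ) * (a : ℂ)))
        = (2 * rescale (((u * v * w : ℕ) : ℂ) * y₁) (exp ℂ) * (Ds d ξ (u * w))⁻¹ *
            Qs d χ ξ (u * w)) *
          (((-1 : ℂ) ^ a * χ a * ξ ^ (v * w * a)) •
            rescale (((v * w * a : ℕ)) : ℂ) (exp ℂ)) := by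
      intro a
      rw [rescale_smul', rescale_Egf d χ _ _ _ hη]
      have hx : ((v : ℂ) * y₁ + (v : ℂ) / (u : ℂ) * (a : ℂ)) * ((w * u : ℕ) : ℂ)
          = ((u * v * w : ℕ) : ℂ) * y₁ + ((v * w * a : ℕ) : ℂ) := by
        push_cast
        field_simp
      have hden : (ξ ^ (u * w)) ^ d • rescale ((d : ℂ) * ((w * u : ℕ) : ℂ)) (exp ℂ) + 1
          = Ds d ξ (u * w) := by
        unfold Ds
        rw [← pow_mul, show u * w * d = d * (u * w) by ring]
        congr 2
        push_cast; ring
      have hQ : (∑ c ∈ Finset.range d, ((-1 : ℂ) ^ c * χ c * (ξ ^ (u * w)) ^ c) •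
          rescale ((c : ℂ) * ((w * u : ℕ) : ℂ)) (exp ℂ)) = Qs d χ ξ (u * w) := by
        unfold Qs
        refine Finset.sum_congr rfl fun c _ => ?_
        rw [← pow_mul]
        congr 2
        push_cast; ring
      rw [hx, ← exp_mul_exp_eq_exp_add, hden, hQ,
        show a * v * w = v * w * a by ring, smul_eq_C_mul, smul_eq_C_mul]
      ring
    rw [Finset.sum_congr rfl fun a _ => hterm a, ← Finset.mul_sum]
    rfl
  have step3 : rescale (((v * u : ℕ)) : ℂ) G = BS d χ ξ w (u * v) := by
    rw [hGdef, map_sum]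
    unfold BS
    refine Finset.sum_congr rfl fun b _ => ?_
    rw [rescale_smul', rescale_rescale]
    congr 2
    push_cast; ring
  have hBS1 : BS d χ ξ u (v * w)
      = (Ds d ξ (v * w))⁻¹ * (Ds d ξ (u * v * w) * Qs d χ ξ (v * w)) := by
    have hm := mult d hd χ hχ ξ u (v * w) hu
    have hc : constantCoeff (Ds d ξ (v * w)) ≠ 0 := by rw [constCoeff_Ds]; exact h3
    have hone : (Ds d ξ (v * w))⁻¹ * Ds d ξ (v * w) = 1 := by
      rw [mul_comm]; exact PowerSeries.mul_inv_cancel _ hc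
    conv_lhs => rw [← one_mul (BS d χ ξ u (v * w)), ← hone, mul_assoc, hm]
    rw [show u * (v * w) = u * v * w by ring]
  have hBS2 : BS d χ ξ w (u * v)
      = (Ds d ξ (u * v))⁻¹ * (Ds d ξ (u * v * w) * Qs d χ ξ (u * v)) := by
    have hm := mult d hd χ hχ ξ w (u * v) hw
    have hc : constantCoeff (Ds d ξ (u * v)) ≠ 0 := by rw [constCoeff_Ds]; exact h1
    have hone : (Ds d ξ (u * v))⁻¹ * Ds d ξ (u * v) = 1 := by
      rw [mul_comm]; exact PowerSeries.mul_inv_cancel _ hc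
    conv_lhs => rw [← one_mul (BS d χ ξ w (u * v)), ← hone, mul_assoc, hm]
    rw [show w * (u * v) = u * v * w by ring]
  rw [step1, step2, step3, hBS1, hBS2]
  unfold SymS
  refine congrArg (fun f => (n.factorial : ℂ) * PowerSeries.coeff n f) ?_
  ring

lemma SymS_swap12 (d : ℕ) (χ : ℤ → ℂ) (ξ : ℂ) (n : ℕ) (y₁ : ℂ) (u v w : ℕ) :
    SymS d χ ξ n y₁ u v w = SymS d χ ξ n y₁ v u w := by
  unfold SymS
  rw [Nat.mul_comm u v]
  refine congrArg (fun f => (n.factorial : ℂ) * PowerSeries.coeff n f) ?_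
  ring

lemma SymS_swap23 (d : ℕ) (χ : ℤ → ℂ) (ξ : ℂ) (n : ℕ) (y₁ : ℂ) (u v w : ℕ) :
    SymS d χ ξ n y₁ u v w = SymS d χ ξ n y₁ u w v := by
  unfold SymS
  rw [Nat.mul_right_comm u v w, Nat.mul_comm v w]
  refine congrArg (fun f => (n.factorial : ℂ) * PowerSeries.coeff n f) ?_
  ring

lemma SymS_cyc (d : ℕ) (χ : ℤ → ℂ) (ξ : ℂ) (n : ℕ) (y₁ : ℂ) (u v w : ℕ) :
    SymS d χ ξ n y₁ u v w = SymS d χ ξ n y₁ v w u := by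
  rw [SymS_swap12, SymS_swap23]

attribute [irreducible] SymS S

/-- Theorem 5: the expression is invariant under all six permutations of `(w₁,w₂,w₃)`. -/
theorem theorem5 (d : ℕ) (hd : Odd d) (hd0 : 0 < d)
    (χ : ℤ → ℂ) (hχ : Function.Periodic χ (d : ℤ)) (ξ : ℂ)
    (w : Fin 3 → ℕ) (hw : ∀ i, 0 < w i) (hwodd : ∀ i, Odd (w i))
    (hξ : ∀ i j, i ≠ j → ξ ^ (d * w i * w j) + 1 ≠ 0)
    (n : ℕ) (y₁ : ℂ) (σ : Equiv.Perm (Fin 3)) :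
    S d χ ξ n y₁ (w (σ 0)) (w (σ 1)) (w (σ 2)) =
      S d χ ξ n y₁ (w 0) (w 1) (w 2) := by
  have hξ' : ∀ i j, i ≠ j → ξ ^ (d * (w i * w j)) + 1 ≠ 0 := by
    intro i j hij
    rw [← Nat.mul_assoc]
    exact hξ i j hij
  have key : ∀ i j k : Fin 3, i ≠ j → i ≠ k → j ≠ k →
      S d χ ξ n y₁ (w i) (w j) (w k) = SymS d χ ξ n y₁ (w i) (w j) (w k) := by
    intro i j k hij hik hjk
    exact S_eq d hd hd0 χ hχ ξ (w i) (w j) (w k) (hwodd i) (hwodd k) (hw i) (hw k)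
      (hξ' i j hij) (hξ' i k hik) (hξ' j k hjk) n y₁
  have h01 : (0 : Fin 3) ≠ 1 := by decide
  have h02 : (0 : Fin 3) ≠ 2 := by decide
  have h12 : (1 : Fin 3) ≠ 2 := by decide
  have hσ01 : σ 0 ≠ σ 1 := fun h => h01 (σ.injective h)
  have hσ02 : σ 0 ≠ σ 2 := fun h => h02 (σ.injective h)
  have hσ12 : σ 1 ≠ σ 2 := fun h => h12 (σ.injective h)
  rw [key _ _ _ hσ01 hσ02 hσ12, key _ _ _ h01 h02 h12]
  have hsym : ∀ a b c : Fin 3, a ≠ b → a ≠ c → b ≠ c →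
      SymS d χ ξ n y₁ (w a) (w b) (w c) = SymS d χ ξ n y₁ (w 0) (w 1) (w 2) := by
    intro a b c hab hac hbc
    fin_cases a <;> fin_cases b <;> fin_cases c <;>
      first
        | exact absurd rfl hab
        | exact absurd rfl hac
        | exact absurd rfl hbc
        | rfl
        | exact (SymS_swap12 d χ ξ n y₁ (w 0) (w 1) (w 2)).symm
        | exact (SymS_swap23 d χ ξ n y₁ (w 0) (w 1) (w 2)).symm
        | exact (SymS_cyc d χ ξ n y₁ (w 0) (w 1) (w 2)).symm
        | exact ((SymS_cyc d χ ξ n y₁ (w 0) (w 1) (w 2)).trans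
            (SymS_cyc d χ ξ n y₁ (w 1) (w 2) (w 0))).symm
        | exact (SymS_cyc d χ ξ n y₁ (w 2) (w 1) (w 0)).trans
            (SymS_swap12 d χ ξ n y₁ (w 1) (w 0) (w 2))
  exact hsym _ _ _ hσ01 hσ02 hσ12
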